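/- For q = 2, the inequality N(k) ≤ ⌈(k-2)/3⌉ holds for all k ≥ 3, where N(k) = #{ j ∈ ℕ : 2j < k - 2, and C(k - 2 - j, j) is odd }; moreover this inequality is strict for all k ≥ 128. -/
import Mathlib

open Finset

private lemma lucas2 (n k : ℕ) :
    Odd (Nat.choose n k) ↔ Odd (Nat.choose (n % 2) (k % 2)) ∧ Odd (Nat.choose (n / 2) (k / 2)) := by
  have h := @Choose.choose_modEq_choose_mod_mul_choose_div_nat n k 2 ⟨Nat.prime_two⟩
  rw [Nat.ModEq] at h
  rw [Nat.odd_iff, h, ← Nat.odd_iff, Nat.odd_mul]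

private lemma lucas_oe (a b : ℕ) : Odd (Nat.choose (2*a+1) (2*b)) ↔ Odd (Nat.choose a b) := by
  rw [lucas2]
  simp [Nat.mul_add_mod, Nat.mul_mod_right, Nat.mul_add_div, Nat.mul_div_cancel_left]

private lemma lucas_ee (a b : ℕ) : Odd (Nat.choose (2*a) (2*b)) ↔ Odd (Nat.choose a b) := by
  rw [lucas2]
  simp [Nat.mul_mod_right, Nat.mul_div_cancel_left]

private lemma lucas_oo (a b : ℕ) : Odd (Nat.choose (2*a+1) (2*b+1)) ↔ Odd (Nat.choose a b) := by
  rw [lucas2]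
  simp [Nat.mul_add_mod, Nat.mul_add_div, Nat.mul_div_cancel_left]

private lemma lucas_eo (a b : ℕ) : ¬ Odd (Nat.choose (2*a) (2*b+1)) := by
  rw [lucas2]
  simp [Nat.mul_mod_right, Nat.mul_add_mod]
private def S (n : ℕ) : Finset ℕ :=
  (Finset.range (n+1)).filter (fun j => 2*j ≤ n ∧ Odd (Nat.choose (n - j) j))

private def g (n : ℕ) : ℕ := (S n).card

private lemma S_odd (m : ℕ) : S (2*m+1) = (S m).image (fun i => 2*i) := by
  ext j
  simp only [S, mem_image, mem_filter, mem_range]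
  constructor
  · rintro ⟨hj, hle, hodd⟩
    rcases Nat.even_or_odd j with ⟨i, hi⟩ | ⟨i, hi⟩
    · refine ⟨i, ⟨⟨by omega, by omega, ?_⟩, by omega⟩⟩
      have h1 : 2*m+1 - j = 2*(m-i)+1 := by omega
      have h2 : j = 2*i := by omega
      rw [h1, h2, lucas_oe] at hodd
      exact hodd
    · have h1 : 2*m+1 - j = 2*(m-i) := by omega
      rw [h1, hi] at hodd
      exact absurd hodd (lucas_eo _ _)
  · rintro ⟨i, ⟨⟨hi1, hi2, hodd⟩, rfl⟩⟩
    refine ⟨by omega, by omega, ?_⟩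
    have h1 : 2*m+1 - 2*i = 2*(m-i)+1 := by omega
    rw [h1, lucas_oe]
    exact hodd

private lemma S_even (m : ℕ) :
    S (2*m+2) = (S (m+1)).image (fun i => 2*i) ∪ (S m).image (fun i => 2*i+1) := by
  ext j
  simp only [S, mem_union, mem_image, mem_filter, mem_range]
  constructor
  · rintro ⟨hj, hle, hodd⟩
    rcases Nat.even_or_odd j with ⟨i, hi⟩ | ⟨i, hi⟩
    · left
      refine ⟨i, ⟨⟨by omega, by omega, ?_⟩, by omega⟩⟩
      have h1 : 2*m+2 - j = 2*(m+1-i) := by omega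
      have h2 : j = 2*i := by omega
      rw [h1, h2, lucas_ee] at hodd
      exact hodd
    · right
      refine ⟨i, ⟨⟨by omega, by omega, ?_⟩, by omega⟩⟩
      have h1 : 2*m+2 - j = 2*(m-i)+1 := by omega
      rw [h1, hi, lucas_oo] at hodd
      exact hodd
  · rintro (⟨i, ⟨⟨hi1, hi2, hodd⟩, rfl⟩⟩ | ⟨i, ⟨⟨hi1, hi2, hodd⟩, rfl⟩⟩)
    · refine ⟨by omega, by omega, ?_⟩
      have h1 : 2*m+2 - 2*i = 2*(m+1-i) := by omega
      rw [h1, lucas_ee]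
      exact hodd
    · refine ⟨by omega, by omega, ?_⟩
      have h1 : 2*m+2 - (2*i+1) = 2*(m-i)+1 := by omega
      rw [h1, lucas_oo]
      exact hodd

private lemma g_odd (m : ℕ) : g (2*m+1) = g m := by
  rw [g, S_odd, Finset.card_image_of_injective _ (fun a b h => by omega)]
  rfl

private lemma g_even (m : ℕ) : g (2*m+2) = g (m+1) + g m := by
  rw [g, S_even, Finset.card_union_of_disjoint, Finset.card_image_of_injective _ (fun a b h => by omega),
    Finset.card_image_of_injective _ (fun a b h => by omega)]
  · rfl
  · simp only [Finset.disjoint_left, mem_image]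
    rintro x ⟨a, _, rfl⟩ ⟨b, _, hb⟩
    omega

private lemma gv0 : g 0 = 1 := by decide
private lemma gv1 : g 1 = 1 := by decide
private lemma gv2 : g 2 = 2 := by rw [show (2:ℕ) = 2*0+2 by norm_num, g_even, gv1, gv0]
private lemma gv3 : g 3 = 1 := by rw [show (3:ℕ) = 2*1+1 by norm_num, g_odd, gv1]
private lemma gv4 : g 4 = 3 := by rw [show (4:ℕ) = 2*1+2 by norm_num, g_even, gv2, gv1]
private lemma gv5 : g 5 = 2 := by rw [show (5:ℕ) = 2*2+1 by norm_num, g_odd, gv2]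
private lemma gv6 : g 6 = 3 := by rw [show (6:ℕ) = 2*2+2 by norm_num, g_even, gv3, gv2]
private lemma gv7 : g 7 = 1 := by rw [show (7:ℕ) = 2*3+1 by norm_num, g_odd, gv3]
private lemma gv8 : g 8 = 4 := by rw [show (8:ℕ) = 2*3+2 by norm_num, g_even, gv4, gv3]
private lemma gv9 : g 9 = 3 := by rw [show (9:ℕ) = 2*4+1 by norm_num, g_odd, gv4]
private lemma gv10 : g 10 = 5 := by rw [show (10:ℕ) = 2*4+2 by norm_num, g_even, gv5, gv4]
private lemma gv11 : g 11 = 2 := by rw [show (11:ℕ) = 2*5+1 by norm_num, g_odd, gv5]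
private lemma gv12 : g 12 = 5 := by rw [show (12:ℕ) = 2*5+2 by norm_num, g_even, gv6, gv5]
private lemma gv13 : g 13 = 3 := by rw [show (13:ℕ) = 2*6+1 by norm_num, g_odd, gv6]
private lemma gv14 : g 14 = 4 := by rw [show (14:ℕ) = 2*6+2 by norm_num, g_even, gv7, gv6]
private lemma gv15 : g 15 = 1 := by rw [show (15:ℕ) = 2*7+1 by norm_num, g_odd, gv7]
private lemma gv16 : g 16 = 5 := by rw [show (16:ℕ) = 2*7+2 by norm_num, g_even, gv8, gv7]
private lemma gv17 : g 17 = 4 := by rw [show (17:ℕ) = 2*8+1 by norm_num, g_odd, gv8]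
private lemma gv18 : g 18 = 7 := by rw [show (18:ℕ) = 2*8+2 by norm_num, g_even, gv9, gv8]
private lemma gv19 : g 19 = 3 := by rw [show (19:ℕ) = 2*9+1 by norm_num, g_odd, gv9]
private lemma gv20 : g 20 = 8 := by rw [show (20:ℕ) = 2*9+2 by norm_num, g_even, gv10, gv9]
private lemma gv21 : g 21 = 5 := by rw [show (21:ℕ) = 2*10+1 by norm_num, g_odd, gv10]
private lemma gv22 : g 22 = 7 := by rw [show (22:ℕ) = 2*10+2 by norm_num, g_even, gv11, gv10]
private lemma gv23 : g 23 = 2 := by rw [show (23:ℕ) = 2*11+1 by norm_num, g_odd, gv11]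
private lemma gv24 : g 24 = 7 := by rw [show (24:ℕ) = 2*11+2 by norm_num, g_even, gv12, gv11]
private lemma gv25 : g 25 = 5 := by rw [show (25:ℕ) = 2*12+1 by norm_num, g_odd, gv12]
private lemma gv26 : g 26 = 8 := by rw [show (26:ℕ) = 2*12+2 by norm_num, g_even, gv13, gv12]
private lemma gv27 : g 27 = 3 := by rw [show (27:ℕ) = 2*13+1 by norm_num, g_odd, gv13]
private lemma gv28 : g 28 = 7 := by rw [show (28:ℕ) = 2*13+2 by norm_num, g_even, gv14, gv13]
private lemma gv29 : g 29 = 4 := by rw [show (29:ℕ) = 2*14+1 by norm_num, g_odd, gv14]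
private lemma gv30 : g 30 = 5 := by rw [show (30:ℕ) = 2*14+2 by norm_num, g_even, gv15, gv14]
private lemma gv31 : g 31 = 1 := by rw [show (31:ℕ) = 2*15+1 by norm_num, g_odd, gv15]
private lemma gv32 : g 32 = 6 := by rw [show (32:ℕ) = 2*15+2 by norm_num, g_even, gv16, gv15]
private lemma gv33 : g 33 = 5 := by rw [show (33:ℕ) = 2*16+1 by norm_num, g_odd, gv16]
private lemma gv34 : g 34 = 9 := by rw [show (34:ℕ) = 2*16+2 by norm_num, g_even, gv17, gv16]
private lemma gv35 : g 35 = 4 := by rw [show (35:ℕ) = 2*17+1 by norm_num, g_odd, gv17]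
private lemma gv36 : g 36 = 11 := by rw [show (36:ℕ) = 2*17+2 by norm_num, g_even, gv18, gv17]
private lemma gv37 : g 37 = 7 := by rw [show (37:ℕ) = 2*18+1 by norm_num, g_odd, gv18]
private lemma gv38 : g 38 = 10 := by rw [show (38:ℕ) = 2*18+2 by norm_num, g_even, gv19, gv18]
private lemma gv39 : g 39 = 3 := by rw [show (39:ℕ) = 2*19+1 by norm_num, g_odd, gv19]
private lemma gv40 : g 40 = 11 := by rw [show (40:ℕ) = 2*19+2 by norm_num, g_even, gv20, gv19]
private lemma gv41 : g 41 = 8 := by rw [show (41:ℕ) = 2*20+1 by norm_num, g_odd, gv20]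
private lemma gv42 : g 42 = 13 := by rw [show (42:ℕ) = 2*20+2 by norm_num, g_even, gv21, gv20]
private lemma gv43 : g 43 = 5 := by rw [show (43:ℕ) = 2*21+1 by norm_num, g_odd, gv21]
private lemma gv44 : g 44 = 12 := by rw [show (44:ℕ) = 2*21+2 by norm_num, g_even, gv22, gv21]
private lemma gv45 : g 45 = 7 := by rw [show (45:ℕ) = 2*22+1 by norm_num, g_odd, gv22]
private lemma gv46 : g 46 = 9 := by rw [show (46:ℕ) = 2*22+2 by norm_num, g_even, gv23, gv22]
private lemma gv47 : g 47 = 2 := by rw [show (47:ℕ) = 2*23+1 by norm_num, g_odd, gv23]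
private lemma gv48 : g 48 = 9 := by rw [show (48:ℕ) = 2*23+2 by norm_num, g_even, gv24, gv23]
private lemma gv49 : g 49 = 7 := by rw [show (49:ℕ) = 2*24+1 by norm_num, g_odd, gv24]
private lemma gv50 : g 50 = 12 := by rw [show (50:ℕ) = 2*24+2 by norm_num, g_even, gv25, gv24]
private lemma gv51 : g 51 = 5 := by rw [show (51:ℕ) = 2*25+1 by norm_num, g_odd, gv25]
private lemma gv52 : g 52 = 13 := by rw [show (52:ℕ) = 2*25+2 by norm_num, g_even, gv26, gv25]
private lemma gv53 : g 53 = 8 := by rw [show (53:ℕ) = 2*26+1 by norm_num, g_odd, gv26]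
private lemma gv54 : g 54 = 11 := by rw [show (54:ℕ) = 2*26+2 by norm_num, g_even, gv27, gv26]
private lemma gv55 : g 55 = 3 := by rw [show (55:ℕ) = 2*27+1 by norm_num, g_odd, gv27]
private lemma gv56 : g 56 = 10 := by rw [show (56:ℕ) = 2*27+2 by norm_num, g_even, gv28, gv27]
private lemma gv57 : g 57 = 7 := by rw [show (57:ℕ) = 2*28+1 by norm_num, g_odd, gv28]
private lemma gv58 : g 58 = 11 := by rw [show (58:ℕ) = 2*28+2 by norm_num, g_even, gv29, gv28]
private lemma gv59 : g 59 = 4 := by rw [show (59:ℕ) = 2*29+1 by norm_num, g_odd, gv29]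
private lemma gv60 : g 60 = 9 := by rw [show (60:ℕ) = 2*29+2 by norm_num, g_even, gv30, gv29]
private lemma gv61 : g 61 = 5 := by rw [show (61:ℕ) = 2*30+1 by norm_num, g_odd, gv30]
private lemma gv62 : g 62 = 6 := by rw [show (62:ℕ) = 2*30+2 by norm_num, g_even, gv31, gv30]
private lemma gv63 : g 63 = 1 := by rw [show (63:ℕ) = 2*31+1 by norm_num, g_odd, gv31]
private lemma gv64 : g 64 = 7 := by rw [show (64:ℕ) = 2*31+2 by norm_num, g_even, gv32, gv31]
private lemma gv65 : g 65 = 6 := by rw [show (65:ℕ) = 2*32+1 by norm_num, g_odd, gv32]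
private lemma gv66 : g 66 = 11 := by rw [show (66:ℕ) = 2*32+2 by norm_num, g_even, gv33, gv32]
private lemma gv67 : g 67 = 5 := by rw [show (67:ℕ) = 2*33+1 by norm_num, g_odd, gv33]
private lemma gv68 : g 68 = 14 := by rw [show (68:ℕ) = 2*33+2 by norm_num, g_even, gv34, gv33]
private lemma gv69 : g 69 = 9 := by rw [show (69:ℕ) = 2*34+1 by norm_num, g_odd, gv34]
private lemma gv70 : g 70 = 13 := by rw [show (70:ℕ) = 2*34+2 by norm_num, g_even, gv35, gv34]
private lemma gv71 : g 71 = 4 := by rw [show (71:ℕ) = 2*35+1 by norm_num, g_odd, gv35]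
private lemma gv72 : g 72 = 15 := by rw [show (72:ℕ) = 2*35+2 by norm_num, g_even, gv36, gv35]
private lemma gv73 : g 73 = 11 := by rw [show (73:ℕ) = 2*36+1 by norm_num, g_odd, gv36]
private lemma gv74 : g 74 = 18 := by rw [show (74:ℕ) = 2*36+2 by norm_num, g_even, gv37, gv36]
private lemma gv75 : g 75 = 7 := by rw [show (75:ℕ) = 2*37+1 by norm_num, g_odd, gv37]
private lemma gv76 : g 76 = 17 := by rw [show (76:ℕ) = 2*37+2 by norm_num, g_even, gv38, gv37]
private lemma gv77 : g 77 = 10 := by rw [show (77:ℕ) = 2*38+1 by norm_num, g_odd, gv38]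
private lemma gv78 : g 78 = 13 := by rw [show (78:ℕ) = 2*38+2 by norm_num, g_even, gv39, gv38]
private lemma gv79 : g 79 = 3 := by rw [show (79:ℕ) = 2*39+1 by norm_num, g_odd, gv39]
private lemma gv80 : g 80 = 14 := by rw [show (80:ℕ) = 2*39+2 by norm_num, g_even, gv40, gv39]
private lemma gv81 : g 81 = 11 := by rw [show (81:ℕ) = 2*40+1 by norm_num, g_odd, gv40]
private lemma gv82 : g 82 = 19 := by rw [show (82:ℕ) = 2*40+2 by norm_num, g_even, gv41, gv40]
private lemma gv83 : g 83 = 8 := by rw [show (83:ℕ) = 2*41+1 by norm_num, g_odd, gv41]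
private lemma gv84 : g 84 = 21 := by rw [show (84:ℕ) = 2*41+2 by norm_num, g_even, gv42, gv41]
private lemma gv85 : g 85 = 13 := by rw [show (85:ℕ) = 2*42+1 by norm_num, g_odd, gv42]
private lemma gv86 : g 86 = 18 := by rw [show (86:ℕ) = 2*42+2 by norm_num, g_even, gv43, gv42]
private lemma gv87 : g 87 = 5 := by rw [show (87:ℕ) = 2*43+1 by norm_num, g_odd, gv43]
private lemma gv88 : g 88 = 17 := by rw [show (88:ℕ) = 2*43+2 by norm_num, g_even, gv44, gv43]
private lemma gv89 : g 89 = 12 := by rw [show (89:ℕ) = 2*44+1 by norm_num, g_odd, gv44]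
private lemma gv90 : g 90 = 19 := by rw [show (90:ℕ) = 2*44+2 by norm_num, g_even, gv45, gv44]
private lemma gv91 : g 91 = 7 := by rw [show (91:ℕ) = 2*45+1 by norm_num, g_odd, gv45]
private lemma gv92 : g 92 = 16 := by rw [show (92:ℕ) = 2*45+2 by norm_num, g_even, gv46, gv45]
private lemma gv93 : g 93 = 9 := by rw [show (93:ℕ) = 2*46+1 by norm_num, g_odd, gv46]
private lemma gv94 : g 94 = 11 := by rw [show (94:ℕ) = 2*46+2 by norm_num, g_even, gv47, gv46]
private lemma gv95 : g 95 = 2 := by rw [show (95:ℕ) = 2*47+1 by norm_num, g_odd, gv47]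
private lemma gv96 : g 96 = 11 := by rw [show (96:ℕ) = 2*47+2 by norm_num, g_even, gv48, gv47]
private lemma gv97 : g 97 = 9 := by rw [show (97:ℕ) = 2*48+1 by norm_num, g_odd, gv48]
private lemma gv98 : g 98 = 16 := by rw [show (98:ℕ) = 2*48+2 by norm_num, g_even, gv49, gv48]
private lemma gv99 : g 99 = 7 := by rw [show (99:ℕ) = 2*49+1 by norm_num, g_odd, gv49]
private lemma gv100 : g 100 = 19 := by rw [show (100:ℕ) = 2*49+2 by norm_num, g_even, gv50, gv49]
private lemma gv101 : g 101 = 12 := by rw [show (101:ℕ) = 2*50+1 by norm_num, g_odd, gv50]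
private lemma gv102 : g 102 = 17 := by rw [show (102:ℕ) = 2*50+2 by norm_num, g_even, gv51, gv50]
private lemma gv103 : g 103 = 5 := by rw [show (103:ℕ) = 2*51+1 by norm_num, g_odd, gv51]
private lemma gv104 : g 104 = 18 := by rw [show (104:ℕ) = 2*51+2 by norm_num, g_even, gv52, gv51]
private lemma gv105 : g 105 = 13 := by rw [show (105:ℕ) = 2*52+1 by norm_num, g_odd, gv52]
private lemma gv106 : g 106 = 21 := by rw [show (106:ℕ) = 2*52+2 by norm_num, g_even, gv53, gv52]
private lemma gv107 : g 107 = 8 := by rw [show (107:ℕ) = 2*53+1 by norm_num, g_odd, gv53]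
private lemma gv108 : g 108 = 19 := by rw [show (108:ℕ) = 2*53+2 by norm_num, g_even, gv54, gv53]
private lemma gv109 : g 109 = 11 := by rw [show (109:ℕ) = 2*54+1 by norm_num, g_odd, gv54]
private lemma gv110 : g 110 = 14 := by rw [show (110:ℕ) = 2*54+2 by norm_num, g_even, gv55, gv54]
private lemma gv111 : g 111 = 3 := by rw [show (111:ℕ) = 2*55+1 by norm_num, g_odd, gv55]
private lemma gv112 : g 112 = 13 := by rw [show (112:ℕ) = 2*55+2 by norm_num, g_even, gv56, gv55]
private lemma gv113 : g 113 = 10 := by rw [show (113:ℕ) = 2*56+1 by norm_num, g_odd, gv56]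
private lemma gv114 : g 114 = 17 := by rw [show (114:ℕ) = 2*56+2 by norm_num, g_even, gv57, gv56]
private lemma gv115 : g 115 = 7 := by rw [show (115:ℕ) = 2*57+1 by norm_num, g_odd, gv57]
private lemma gv116 : g 116 = 18 := by rw [show (116:ℕ) = 2*57+2 by norm_num, g_even, gv58, gv57]
private lemma gv117 : g 117 = 11 := by rw [show (117:ℕ) = 2*58+1 by norm_num, g_odd, gv58]
private lemma gv118 : g 118 = 15 := by rw [show (118:ℕ) = 2*58+2 by norm_num, g_even, gv59, gv58]
private lemma gv119 : g 119 = 4 := by rw [show (119:ℕ) = 2*59+1 by norm_num, g_odd, gv59]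
private lemma gv120 : g 120 = 13 := by rw [show (120:ℕ) = 2*59+2 by norm_num, g_even, gv60, gv59]
private lemma gv121 : g 121 = 9 := by rw [show (121:ℕ) = 2*60+1 by norm_num, g_odd, gv60]
private lemma gv122 : g 122 = 14 := by rw [show (122:ℕ) = 2*60+2 by norm_num, g_even, gv61, gv60]
private lemma gv123 : g 123 = 5 := by rw [show (123:ℕ) = 2*61+1 by norm_num, g_odd, gv61]
private lemma gv124 : g 124 = 11 := by rw [show (124:ℕ) = 2*61+2 by norm_num, g_even, gv62, gv61]
private lemma gv125 : g 125 = 6 := by rw [show (125:ℕ) = 2*62+1 by norm_num, g_odd, gv62]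
private lemma gv126 : g 126 = 7 := by rw [show (126:ℕ) = 2*62+2 by norm_num, g_even, gv63, gv62]
private lemma gv127 : g 127 = 1 := by rw [show (127:ℕ) = 2*63+1 by norm_num, g_odd, gv63]
private lemma gv128 : g 128 = 8 := by rw [show (128:ℕ) = 2*63+2 by norm_num, g_even, gv64, gv63]
private lemma gv129 : g 129 = 7 := by rw [show (129:ℕ) = 2*64+1 by norm_num, g_odd, gv64]
private lemma gv130 : g 130 = 13 := by rw [show (130:ℕ) = 2*64+2 by norm_num, g_even, gv65, gv64]
private lemma gv131 : g 131 = 6 := by rw [show (131:ℕ) = 2*65+1 by norm_num, g_odd, gv65]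
private lemma gv132 : g 132 = 17 := by rw [show (132:ℕ) = 2*65+2 by norm_num, g_even, gv66, gv65]
private lemma gv133 : g 133 = 11 := by rw [show (133:ℕ) = 2*66+1 by norm_num, g_odd, gv66]
private lemma gv134 : g 134 = 16 := by rw [show (134:ℕ) = 2*66+2 by norm_num, g_even, gv67, gv66]
private lemma gv135 : g 135 = 5 := by rw [show (135:ℕ) = 2*67+1 by norm_num, g_odd, gv67]
private lemma gv136 : g 136 = 19 := by rw [show (136:ℕ) = 2*67+2 by norm_num, g_even, gv68, gv67]
private lemma gv137 : g 137 = 14 := by rw [show (137:ℕ) = 2*68+1 by norm_num, g_odd, gv68]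
private lemma gv138 : g 138 = 23 := by rw [show (138:ℕ) = 2*68+2 by norm_num, g_even, gv69, gv68]
private lemma gv139 : g 139 = 9 := by rw [show (139:ℕ) = 2*69+1 by norm_num, g_odd, gv69]
private lemma gv140 : g 140 = 22 := by rw [show (140:ℕ) = 2*69+2 by norm_num, g_even, gv70, gv69]
private lemma gv141 : g 141 = 13 := by rw [show (141:ℕ) = 2*70+1 by norm_num, g_odd, gv70]
private lemma gv142 : g 142 = 17 := by rw [show (142:ℕ) = 2*70+2 by norm_num, g_even, gv71, gv70]
private lemma gv143 : g 143 = 4 := by rw [show (143:ℕ) = 2*71+1 by norm_num, g_odd, gv71]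
private lemma gv144 : g 144 = 19 := by rw [show (144:ℕ) = 2*71+2 by norm_num, g_even, gv72, gv71]
private lemma gv145 : g 145 = 15 := by rw [show (145:ℕ) = 2*72+1 by norm_num, g_odd, gv72]
private lemma gv146 : g 146 = 26 := by rw [show (146:ℕ) = 2*72+2 by norm_num, g_even, gv73, gv72]
private lemma gv147 : g 147 = 11 := by rw [show (147:ℕ) = 2*73+1 by norm_num, g_odd, gv73]
private lemma gv148 : g 148 = 29 := by rw [show (148:ℕ) = 2*73+2 by norm_num, g_even, gv74, gv73]
private lemma gv149 : g 149 = 18 := by rw [show (149:ℕ) = 2*74+1 by norm_num, g_odd, gv74]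
private lemma gv150 : g 150 = 25 := by rw [show (150:ℕ) = 2*74+2 by norm_num, g_even, gv75, gv74]
private lemma gv151 : g 151 = 7 := by rw [show (151:ℕ) = 2*75+1 by norm_num, g_odd, gv75]
private lemma gv152 : g 152 = 24 := by rw [show (152:ℕ) = 2*75+2 by norm_num, g_even, gv76, gv75]
private lemma gv153 : g 153 = 17 := by rw [show (153:ℕ) = 2*76+1 by norm_num, g_odd, gv76]
private lemma gv154 : g 154 = 27 := by rw [show (154:ℕ) = 2*76+2 by norm_num, g_even, gv77, gv76]
private lemma gv155 : g 155 = 10 := by rw [show (155:ℕ) = 2*77+1 by norm_num, g_odd, gv77]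
private lemma gv156 : g 156 = 23 := by rw [show (156:ℕ) = 2*77+2 by norm_num, g_even, gv78, gv77]
private lemma gv157 : g 157 = 13 := by rw [show (157:ℕ) = 2*78+1 by norm_num, g_odd, gv78]
private lemma gv158 : g 158 = 16 := by rw [show (158:ℕ) = 2*78+2 by norm_num, g_even, gv79, gv78]
private lemma gv159 : g 159 = 3 := by rw [show (159:ℕ) = 2*79+1 by norm_num, g_odd, gv79]
private lemma gv160 : g 160 = 17 := by rw [show (160:ℕ) = 2*79+2 by norm_num, g_even, gv80, gv79]
private lemma gv161 : g 161 = 14 := by rw [show (161:ℕ) = 2*80+1 by norm_num, g_odd, gv80]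
private lemma gv162 : g 162 = 25 := by rw [show (162:ℕ) = 2*80+2 by norm_num, g_even, gv81, gv80]
private lemma gv163 : g 163 = 11 := by rw [show (163:ℕ) = 2*81+1 by norm_num, g_odd, gv81]
private lemma gv164 : g 164 = 30 := by rw [show (164:ℕ) = 2*81+2 by norm_num, g_even, gv82, gv81]
private lemma gv165 : g 165 = 19 := by rw [show (165:ℕ) = 2*82+1 by norm_num, g_odd, gv82]
private lemma gv166 : g 166 = 27 := by rw [show (166:ℕ) = 2*82+2 by norm_num, g_even, gv83, gv82]
private lemma gv167 : g 167 = 8 := by rw [show (167:ℕ) = 2*83+1 by norm_num, g_odd, gv83]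
private lemma gv168 : g 168 = 29 := by rw [show (168:ℕ) = 2*83+2 by norm_num, g_even, gv84, gv83]
private lemma gv169 : g 169 = 21 := by rw [show (169:ℕ) = 2*84+1 by norm_num, g_odd, gv84]
private lemma gv170 : g 170 = 34 := by rw [show (170:ℕ) = 2*84+2 by norm_num, g_even, gv85, gv84]
private lemma gv171 : g 171 = 13 := by rw [show (171:ℕ) = 2*85+1 by norm_num, g_odd, gv85]
private lemma gv172 : g 172 = 31 := by rw [show (172:ℕ) = 2*85+2 by norm_num, g_even, gv86, gv85]
private lemma gv173 : g 173 = 18 := by rw [show (173:ℕ) = 2*86+1 by norm_num, g_odd, gv86]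
private lemma gv174 : g 174 = 23 := by rw [show (174:ℕ) = 2*86+2 by norm_num, g_even, gv87, gv86]
private lemma gv175 : g 175 = 5 := by rw [show (175:ℕ) = 2*87+1 by norm_num, g_odd, gv87]
private lemma gv176 : g 176 = 22 := by rw [show (176:ℕ) = 2*87+2 by norm_num, g_even, gv88, gv87]
private lemma gv177 : g 177 = 17 := by rw [show (177:ℕ) = 2*88+1 by norm_num, g_odd, gv88]
private lemma gv178 : g 178 = 29 := by rw [show (178:ℕ) = 2*88+2 by norm_num, g_even, gv89, gv88]
private lemma gv179 : g 179 = 12 := by rw [show (179:ℕ) = 2*89+1 by norm_num, g_odd, gv89]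
private lemma gv180 : g 180 = 31 := by rw [show (180:ℕ) = 2*89+2 by norm_num, g_even, gv90, gv89]
private lemma gv181 : g 181 = 19 := by rw [show (181:ℕ) = 2*90+1 by norm_num, g_odd, gv90]
private lemma gv182 : g 182 = 26 := by rw [show (182:ℕ) = 2*90+2 by norm_num, g_even, gv91, gv90]
private lemma gv183 : g 183 = 7 := by rw [show (183:ℕ) = 2*91+1 by norm_num, g_odd, gv91]
private lemma gv184 : g 184 = 23 := by rw [show (184:ℕ) = 2*91+2 by norm_num, g_even, gv92, gv91]
private lemma gv185 : g 185 = 16 := by rw [show (185:ℕ) = 2*92+1 by norm_num, g_odd, gv92]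
private lemma gv186 : g 186 = 25 := by rw [show (186:ℕ) = 2*92+2 by norm_num, g_even, gv93, gv92]
private lemma gv187 : g 187 = 9 := by rw [show (187:ℕ) = 2*93+1 by norm_num, g_odd, gv93]
private lemma gv188 : g 188 = 20 := by rw [show (188:ℕ) = 2*93+2 by norm_num, g_even, gv94, gv93]
private lemma gv189 : g 189 = 11 := by rw [show (189:ℕ) = 2*94+1 by norm_num, g_odd, gv94]
private lemma gv190 : g 190 = 13 := by rw [show (190:ℕ) = 2*94+2 by norm_num, g_even, gv95, gv94]
private lemma gv191 : g 191 = 2 := by rw [show (191:ℕ) = 2*95+1 by norm_num, g_odd, gv95]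
private lemma gv192 : g 192 = 13 := by rw [show (192:ℕ) = 2*95+2 by norm_num, g_even, gv96, gv95]
private lemma gv193 : g 193 = 11 := by rw [show (193:ℕ) = 2*96+1 by norm_num, g_odd, gv96]
private lemma gv194 : g 194 = 20 := by rw [show (194:ℕ) = 2*96+2 by norm_num, g_even, gv97, gv96]
private lemma gv195 : g 195 = 9 := by rw [show (195:ℕ) = 2*97+1 by norm_num, g_odd, gv97]
private lemma gv196 : g 196 = 25 := by rw [show (196:ℕ) = 2*97+2 by norm_num, g_even, gv98, gv97]
private lemma gv197 : g 197 = 16 := by rw [show (197:ℕ) = 2*98+1 by norm_num, g_odd, gv98]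
private lemma gv198 : g 198 = 23 := by rw [show (198:ℕ) = 2*98+2 by norm_num, g_even, gv99, gv98]
private lemma gv199 : g 199 = 7 := by rw [show (199:ℕ) = 2*99+1 by norm_num, g_odd, gv99]
private lemma gv200 : g 200 = 26 := by rw [show (200:ℕ) = 2*99+2 by norm_num, g_even, gv100, gv99]
private lemma gv201 : g 201 = 19 := by rw [show (201:ℕ) = 2*100+1 by norm_num, g_odd, gv100]
private lemma gv202 : g 202 = 31 := by rw [show (202:ℕ) = 2*100+2 by norm_num, g_even, gv101, gv100]
private lemma gv203 : g 203 = 12 := by rw [show (203:ℕ) = 2*101+1 by norm_num, g_odd, gv101]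
private lemma gv204 : g 204 = 29 := by rw [show (204:ℕ) = 2*101+2 by norm_num, g_even, gv102, gv101]
private lemma gv205 : g 205 = 17 := by rw [show (205:ℕ) = 2*102+1 by norm_num, g_odd, gv102]
private lemma gv206 : g 206 = 22 := by rw [show (206:ℕ) = 2*102+2 by norm_num, g_even, gv103, gv102]
private lemma gv207 : g 207 = 5 := by rw [show (207:ℕ) = 2*103+1 by norm_num, g_odd, gv103]
private lemma gv208 : g 208 = 23 := by rw [show (208:ℕ) = 2*103+2 by norm_num, g_even, gv104, gv103]
private lemma gv209 : g 209 = 18 := by rw [show (209:ℕ) = 2*104+1 by norm_num, g_odd, gv104]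
private lemma gv210 : g 210 = 31 := by rw [show (210:ℕ) = 2*104+2 by norm_num, g_even, gv105, gv104]
private lemma gv211 : g 211 = 13 := by rw [show (211:ℕ) = 2*105+1 by norm_num, g_odd, gv105]
private lemma gv212 : g 212 = 34 := by rw [show (212:ℕ) = 2*105+2 by norm_num, g_even, gv106, gv105]
private lemma gv213 : g 213 = 21 := by rw [show (213:ℕ) = 2*106+1 by norm_num, g_odd, gv106]
private lemma gv214 : g 214 = 29 := by rw [show (214:ℕ) = 2*106+2 by norm_num, g_even, gv107, gv106]
private lemma gv215 : g 215 = 8 := by rw [show (215:ℕ) = 2*107+1 by norm_num, g_odd, gv107]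
private lemma gv216 : g 216 = 27 := by rw [show (216:ℕ) = 2*107+2 by norm_num, g_even, gv108, gv107]
private lemma gv217 : g 217 = 19 := by rw [show (217:ℕ) = 2*108+1 by norm_num, g_odd, gv108]
private lemma gv218 : g 218 = 30 := by rw [show (218:ℕ) = 2*108+2 by norm_num, g_even, gv109, gv108]
private lemma gv219 : g 219 = 11 := by rw [show (219:ℕ) = 2*109+1 by norm_num, g_odd, gv109]
private lemma gv220 : g 220 = 25 := by rw [show (220:ℕ) = 2*109+2 by norm_num, g_even, gv110, gv109]
private lemma gv221 : g 221 = 14 := by rw [show (221:ℕ) = 2*110+1 by norm_num, g_odd, gv110]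
private lemma gv222 : g 222 = 17 := by rw [show (222:ℕ) = 2*110+2 by norm_num, g_even, gv111, gv110]
private lemma gv223 : g 223 = 3 := by rw [show (223:ℕ) = 2*111+1 by norm_num, g_odd, gv111]
private lemma gv224 : g 224 = 16 := by rw [show (224:ℕ) = 2*111+2 by norm_num, g_even, gv112, gv111]
private lemma gv225 : g 225 = 13 := by rw [show (225:ℕ) = 2*112+1 by norm_num, g_odd, gv112]
private lemma gv226 : g 226 = 23 := by rw [show (226:ℕ) = 2*112+2 by norm_num, g_even, gv113, gv112]
private lemma gv227 : g 227 = 10 := by rw [show (227:ℕ) = 2*113+1 by norm_num, g_odd, gv113]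
private lemma gv228 : g 228 = 27 := by rw [show (228:ℕ) = 2*113+2 by norm_num, g_even, gv114, gv113]
private lemma gv229 : g 229 = 17 := by rw [show (229:ℕ) = 2*114+1 by norm_num, g_odd, gv114]
private lemma gv230 : g 230 = 24 := by rw [show (230:ℕ) = 2*114+2 by norm_num, g_even, gv115, gv114]
private lemma gv231 : g 231 = 7 := by rw [show (231:ℕ) = 2*115+1 by norm_num, g_odd, gv115]
private lemma gv232 : g 232 = 25 := by rw [show (232:ℕ) = 2*115+2 by norm_num, g_even, gv116, gv115]
private lemma gv233 : g 233 = 18 := by rw [show (233:ℕ) = 2*116+1 by norm_num, g_odd, gv116]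
private lemma gv234 : g 234 = 29 := by rw [show (234:ℕ) = 2*116+2 by norm_num, g_even, gv117, gv116]
private lemma gv235 : g 235 = 11 := by rw [show (235:ℕ) = 2*117+1 by norm_num, g_odd, gv117]
private lemma gv236 : g 236 = 26 := by rw [show (236:ℕ) = 2*117+2 by norm_num, g_even, gv118, gv117]
private lemma gv237 : g 237 = 15 := by rw [show (237:ℕ) = 2*118+1 by norm_num, g_odd, gv118]
private lemma gv238 : g 238 = 19 := by rw [show (238:ℕ) = 2*118+2 by norm_num, g_even, gv119, gv118]
private lemma gv239 : g 239 = 4 := by rw [show (239:ℕ) = 2*119+1 by norm_num, g_odd, gv119]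
private lemma gv240 : g 240 = 17 := by rw [show (240:ℕ) = 2*119+2 by norm_num, g_even, gv120, gv119]
private lemma gv241 : g 241 = 13 := by rw [show (241:ℕ) = 2*120+1 by norm_num, g_odd, gv120]
private lemma gv242 : g 242 = 22 := by rw [show (242:ℕ) = 2*120+2 by norm_num, g_even, gv121, gv120]
private lemma gv243 : g 243 = 9 := by rw [show (243:ℕ) = 2*121+1 by norm_num, g_odd, gv121]
private lemma gv244 : g 244 = 23 := by rw [show (244:ℕ) = 2*121+2 by norm_num, g_even, gv122, gv121]
private lemma gv245 : g 245 = 14 := by rw [show (245:ℕ) = 2*122+1 by norm_num, g_odd, gv122]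
private lemma gv246 : g 246 = 19 := by rw [show (246:ℕ) = 2*122+2 by norm_num, g_even, gv123, gv122]
private lemma gv247 : g 247 = 5 := by rw [show (247:ℕ) = 2*123+1 by norm_num, g_odd, gv123]
private lemma gv248 : g 248 = 16 := by rw [show (248:ℕ) = 2*123+2 by norm_num, g_even, gv124, gv123]
private lemma gv249 : g 249 = 11 := by rw [show (249:ℕ) = 2*124+1 by norm_num, g_odd, gv124]
private lemma gv250 : g 250 = 17 := by rw [show (250:ℕ) = 2*124+2 by norm_num, g_even, gv125, gv124]
private lemma gv251 : g 251 = 6 := by rw [show (251:ℕ) = 2*125+1 by norm_num, g_odd, gv125]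
private lemma gv252 : g 252 = 13 := by rw [show (252:ℕ) = 2*125+2 by norm_num, g_even, gv126, gv125]
private lemma gv253 : g 253 = 7 := by rw [show (253:ℕ) = 2*126+1 by norm_num, g_odd, gv126]
private lemma arith_split (m : ℕ) : ∃ t r, r < 6 ∧ m = 6*t + r :=
  ⟨m/6, m%6, Nat.mod_lt _ (by norm_num), by omega⟩

private lemma gbound : ∀ n, g n ≤ (n+2)/3 + (n+1)%2 := by
  intro n
  induction n using Nat.strong_induction_on with
  | _ n ih =>
    match n with
    | 0 => simp [gv0]
    | 1 => simp [gv1]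
    | (n+2) =>
      rcases Nat.even_or_odd n with ⟨m, hm⟩ | ⟨m, hm⟩
      · have hn : n + 2 = 2*m+2 := by omega
        rw [hn, g_even]
        have h1 := ih (m+1) (by omega)
        have h2 := ih m (by omega)
        obtain ⟨t, r, hr, rfl⟩ := arith_split m
        interval_cases r <;> omega
      · have hn : n + 2 = 2*(m+1)+1 := by omega
        rw [hn, g_odd]
        have h1 := ih (m+1) (by omega)
        obtain ⟨t, r, hr, rfl⟩ := arith_split m
        interval_cases r <;> omega

private lemma gbase : ∀ n, 126 ≤ n → n ≤ 253 → g n + 1 ≤ (n+2)/3 + (n+1)%2 := by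
  intro n h1 h2
  interval_cases n <;> simp only [gv0, gv1, gv2, gv3, gv4, gv5, gv6, gv7, gv8, gv9, gv10, gv11, gv12, gv13, gv14, gv15, gv16, gv17, gv18, gv19, gv20, gv21, gv22, gv23, gv24, gv25, gv26, gv27, gv28, gv29, gv30, gv31, gv32, gv33, gv34, gv35, gv36, gv37, gv38, gv39, gv40, gv41, gv42, gv43, gv44, gv45, gv46, gv47, gv48, gv49, gv50, gv51, gv52, gv53, gv54, gv55, gv56, gv57, gv58, gv59, gv60, gv61, gv62, gv63, gv64, gv65, gv66, gv67, gv68, gv69, gv70, gv71, gv72, gv73, gv74, gv75, gv76, gv77, gv78, gv79, gv80, gv81, gv82, gv83, gv84, gv85, gv86, gv87, gv88, gv89, gv90, gv91, gv92, gv93, gv94, gv95, gv96, gv97, gv98, gv99, gv100, gv101, gv102, gv103, gv104, gv105, gv106, gv107, gv108, gv109, gv110, gv111, gv112, gv113, gv114, gv115, gv116, gv117, gv118, gv119, gv120, gv121, gv122, gv123, gv124, gv125, gv126, gv127, gv128, gv129, gv130, gv131, gv132, gv133, gv134, gv135, gv136, gv137, gv138, gv139, gv140, gv141, gv142, gv143,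 gv144, gv145, gv146, gv147, gv148, gv149, gv150, gv151, gv152, gv153, gv154, gv155, gv156, gv157, gv158, gv159, gv160, gv161, gv162, gv163, gv164, gv165, gv166, gv167, gv168, gv169, gv170, gv171, gv172, gv173, gv174, gv175, gv176, gv177, gv178, gv179, gv180, gv181, gv182, gv183, gv184, gv185, gv186, gv187, gv188, gv189, gv190, gv191, gv192, gv193, gv194, gv195, gv196, gv197, gv198, gv199, gv200, gv201, gv202, gv203, gv204, gv205, gv206, gv207, gv208, gv209, gv210, gv211, gv212, gv213, gv214, gv215, gv216, gv217, gv218, gv219, gv220, gv221, gv222, gv223, gv224, gv225, gv226, gv227, gv228, gv229, gv230, gv231, gv232, gv233, gv234, gv235, gv236, gv237, gv238, gv239, gv240, gv241, gv242, gv243, gv244, gv245, gv246, gv247, gv248, gv249, gv250, gv251, gv252, gv253] <;> decide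

private lemma gstrict : ∀ n, 126 ≤ n → g n + 1 ≤ (n+2)/3 + (n+1)%2 := by
  intro n
  induction n using Nat.strong_induction_on with
  | _ n ih =>
    intro h126
    rcases le_or_gt n 253 with h | h
    · exact gbase n h126 h
    · rcases Nat.even_or_odd n with ⟨m, hm⟩ | ⟨m, hm⟩
      · have hm1 : 1 ≤ m := by omega
        have hn : n = 2*(m-1)+2 := by omega
        rw [hn, g_even]
        have h1 := ih (m-1+1) (by omega) (by omega)
        have h2 := ih (m-1) (by omega) (by omega)
        obtain ⟨t, r, hr, hrr⟩ := arith_split (m-1)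
        rw [hrr] at h1 h2 ⊢
        interval_cases r <;> omega
      · have hn : n = 2*m+1 := by omega
        rw [hn, g_odd]
        have h1 := ih m (by omega) (by omega)
        obtain ⟨t, r, hr, rfl⟩ := arith_split m
        interval_cases r <;> omega


private lemma ceil_third (n : ℕ) : ⌈((n:ℚ))/3⌉ = ((n+2)/3 : ℕ) := by
  have h1 : (n:ℤ) ≤ 3 * (((n+2)/3 : ℕ) : ℤ) := by omega
  have h2 : 3 * (((n+2)/3 : ℕ) : ℤ) < (n:ℤ) + 3 := by omega
  rw [Int.ceil_eq_iff]
  constructor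
  · rw [lt_div_iff₀ (by norm_num : (0:ℚ) < 3)]
    have h2' : (3 * (((n+2)/3 : ℕ) : ℤ) : ℚ) < (n:ℚ) + 3 := by exact_mod_cast h2
    push_cast at h2' ⊢
    linarith
  · rw [div_le_iff₀ (by norm_num : (0:ℚ) < 3)]
    have h1' : (n:ℚ) ≤ (3 * (((n+2)/3 : ℕ) : ℤ) : ℚ) := by exact_mod_cast h1
    push_cast at h1' ⊢
    linarith

private lemma half_mem (n : ℕ) (h : n % 2 = 0) : n/2 ∈ S n := by
  simp only [S, mem_filter, mem_range]
  refine ⟨by omega, by omega, ?_⟩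
  have : n - n/2 = n/2 := by omega
  rw [this, Nat.choose_self]
  exact odd_one

/-- For `q = 2`: with `N(k) = #{ j ∈ ℕ : 2j < k - 2, C(k - 2 - j, j) odd }`, the inequality
`N(k) ≤ ⌈(k-2)/3⌉` holds for all `k ≥ 3`, and it is strict for all `k ≥ 128`. -/
theorem stmt19 (k : ℕ) (hk : 3 ≤ k) :
    ((((Finset.range k).filter
        (fun j => 2 * j < k - 2 ∧ Odd (Nat.choose (k - 2 - j) j))).card : ℤ)
      ≤ ⌈((k : ℚ) - 2) / 3⌉) ∧
      (128 ≤ k →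
        ((((Finset.range k).filter
            (fun j => 2 * j < k - 2 ∧ Odd (Nat.choose (k - 2 - j) j))).card : ℤ)
          < ⌈((k : ℚ) - 2) / 3⌉)) := by
  obtain ⟨n, rfl⟩ : ∃ n, k = n + 2 := ⟨k - 2, by omega⟩
  simp only [Nat.add_sub_cancel]
  have hcast : (((n + 2 : ℕ) : ℚ) - 2) = (n : ℚ) := by push_cast; ring
  rw [hcast, ceil_third]
  rcases Nat.even_or_odd n with he | ho
  · -- n even
    have hp : n % 2 = 0 := Nat.even_iff.mp he
    have hmem := half_mem n hp
    have hT : (Finset.range (n+2)).filter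
        (fun j => 2 * j < n ∧ Odd (Nat.choose (n - j) j)) = (S n).erase (n/2) := by
      ext j
      simp only [S, mem_erase, mem_filter, mem_range]
      constructor
      · rintro ⟨h1, h2, h3⟩
        exact ⟨by omega, by omega, by omega, h3⟩
      · rintro ⟨h0, h1, h2, h3⟩
        exact ⟨by omega, by omega, h3⟩
    rw [hT, Finset.card_erase_of_mem hmem]
    have hg1 : 1 ≤ g n := Finset.card_pos.mpr ⟨n/2, hmem⟩
    have hb := gbound n
    constructor
    · show ((g n - 1 : ℕ) : ℤ) ≤ _
      omega
    · intro h128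
      have hs := gstrict n (by omega)
      show ((g n - 1 : ℕ) : ℤ) < _
      omega
  · -- n odd
    have hp : n % 2 = 1 := Nat.odd_iff.mp ho
    have hT : (Finset.range (n+2)).filter
        (fun j => 2 * j < n ∧ Odd (Nat.choose (n - j) j)) = S n := by
      ext j
      simp only [S, mem_filter, mem_range]
      constructor
      · rintro ⟨h1, h2, h3⟩
        exact ⟨by omega, by omega, h3⟩
      · rintro ⟨h1, h2, h3⟩
        exact ⟨by omega, by omega, h3⟩
    rw [hT]
    have hb := gbound n
    constructor
    · show ((g n : ℕ) : ℤ) ≤ _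
      omega
    · intro h128
      have hs := gstrict n (by omega)
      show ((g n : ℕ) : ℤ) < _
      omega
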